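/- arXiv:1911.04523 — 4 statements merged into one kernel-verified Lean document; each statement's English description precedes it below -/
import Mathlib

section
/- For a compatible family of partial functions f_i : ℝⁿ ⇀ ℝᵐ (i ∈ I) with open domains, the forward differential of the supremum equals the supremum of the forward differentials: d(⋁_i f_i) = ⋁_i d(f_i), and similarly for reverse differentials d^r(⋁_i f_i) = ⋁_i d^r(f_i). -/
open scoped Classical

noncomputable section

instance {X Y : Type*} : PartialOrder (PFun X Y) :=
  inferInstanceAs (PartialOrder (X → Part Y))

/-- Partial functions `ℝⁿ ⇀ ℝᵐ`. -/
abbrev PF (n m : ℕ) := PFun (Fin n → ℝ) (Fin m → ℝ)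

/-- A partial function between topological spaces is continuous if
preimages of open sets are open. -/
def PCont {X Y : Type*} [TopologicalSpace X] [TopologicalSpace Y] (f : PFun X Y) : Prop :=
  ∀ B : Set Y, IsOpen B → IsOpen (f.preimage B)

/-- Total extension of a partial function (junk value `0` off the domain);
since domains are open, all local differential notions are independent of the junk). -/
def pext {n m : ℕ} (f : PF n m) : (Fin n → ℝ) → (Fin m → ℝ) :=
  fun x => if h : (f x).Dom then (f x).get h else 0

/-- The Jacobian of `f` is defined at `x`: `x ∈ Dom f` and all partial derivatives
of all components of `f` exist at `x`. -/
def JacDefined {n m : ℕ} (f : PF n m) (x : Fin n → ℝ) : Prop :=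
  x ∈ f.Dom ∧ ∀ (i : Fin m) (j : Fin n),
    DifferentiableAt ℝ (fun t : ℝ => pext f (x + t • (Pi.single j 1 : Fin n → ℝ)) i) 0

/-- The Jacobian matrix `J_x(f)` (junk entries where undefined). -/
def jac {n m : ℕ} (f : PF n m) (x : Fin n → ℝ) : Matrix (Fin m) (Fin n) ℝ :=
  fun i j => deriv (fun t : ℝ => pext f (x + t • (Pi.single j 1 : Fin n → ℝ)) i) 0

/-- First component of a concatenated vector. -/
def vleft (n k : ℕ) (z : Fin (n + k) → ℝ) : Fin n → ℝ := fun i => z (Fin.castAdd k i)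
/-- Second component of a concatenated vector. -/
def vright (n k : ℕ) (z : Fin (n + k) → ℝ) : Fin k → ℝ := fun j => z (Fin.natAdd n j)

/-- Forward differential `d(f) : ℝⁿ ×̇ ℝⁿ ⇀ ℝᵐ`, `d(f)(x,y) ≃ J_x(f)·y`. -/
def fdiff {n m : ℕ} (f : PF n m) : PF (n + n) m :=
  fun z => ⟨JacDefined f (vleft n n z),
    fun _ => (jac f (vleft n n z)).mulVec (vright n n z)⟩

/-- Reverse differential `d^r(f) : ℝⁿ ×̇ ℝᵐ ⇀ ℝⁿ`, `d^r(f)(x,y) ≃ J_x(f)ᵀ·y`. -/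
def rdiff {n m : ℕ} (f : PF n m) : PF (n + m) n :=
  fun z => ⟨JacDefined f (vleft n m z),
    fun _ => (jac f (vleft n m z)).transpose.mulVec (vright n m z)⟩

/-- Forward derivative at a point, `d_x(f) : ℝⁿ ⇀ ℝᵐ` (⊥ if the Jacobian is undefined). -/
def fdiffAt {n m : ℕ} (f : PF n m) (x : Fin n → ℝ) : PFun (Fin n → ℝ) (Fin m → ℝ) :=
  fun y => ⟨JacDefined f x, fun _ => (jac f x).mulVec y⟩

/-- Reverse derivative at a point, `d^r_x(f) : ℝᵐ ⇀ ℝⁿ` (⊥ if the Jacobian is undefined). -/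
def rdiffAt {n m : ℕ} (f : PF n m) (x : Fin n → ℝ) : PFun (Fin m → ℝ) (Fin n → ℝ) :=
  fun y => ⟨JacDefined f x, fun _ => (jac f x).transpose.mulVec y⟩

/-- `C^k` for partial functions with open domain: `C⁰` = continuous with open domain;
`C^{k+1}` = the forward differential has domain `Dom f × ℝⁿ` and is `C^k`. -/
def IsCkAux : ℕ → (n m : ℕ) → PF n m → Prop
  | 0, _, _, f => IsOpen f.Dom ∧ PCont f
  | (k+1), n, _, f => (fdiff f).Dom = {z | vleft n n z ∈ f.Dom} ∧ IsCkAux k _ _ (fdiff f)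

def IsCk (k : ℕ) {n m : ℕ} (f : PF n m) : Prop := IsCkAux k n m f

/-- PSmooth = `C^k` for all `k`. -/
def PSmooth {n m : ℕ} (f : PF n m) : Prop := ∀ k, IsCk k f

/-- Continuously differentiable: open domain, continuous, Jacobian defined
and continuous on the whole domain. -/
def ContDiffP {n m : ℕ} (f : PF n m) : Prop :=
  IsOpen f.Dom ∧ PCont f ∧ (∀ x ∈ f.Dom, JacDefined f x) ∧ ContinuousOn (jac f) f.Dom

/-- Supremum (union of graphs) of a family of partial functions. -/
def pfunSup {X Y I : Type*} (f : I → PFun X Y) : PFun X Y :=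
  fun x => ⟨∃ i, (f i x).Dom, fun h => (f (Classical.choose h) x).get (Classical.choose_spec h)⟩

/-- The conditional `Cond(p, f, g)`. -/
def pcond {X Y : Type*} (p : PFun X Bool) (f g : PFun X Y) : PFun X Y :=
  fun x =>
    ⟨(true ∈ p x ∧ (f x).Dom) ∨ (false ∈ p x ∧ (g x).Dom),
     fun h =>
       if htt : true ∈ p x then
         (f x).get (by
           rcases h with ⟨_, hf⟩ | ⟨hff, _⟩
           · exact hf
           · exact absurd (Part.mem_unique htt hff) (by simp))
       else
         (g x).get (by
           rcases h with ⟨htt', _⟩ | ⟨_, hg⟩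
           · exact absurd htt' htt
           · exact hg)⟩

end

section aux
variable {n m : ℕ} {I : Type*}

lemma sup_eq_of_dom (f : I → PF n m)
    (hcompat : ∀ i j, ∃ h : PF n m, f i ≤ h ∧ f j ≤ h)
    {i : I} {x : Fin n → ℝ} (h : (f i x).Dom) : pfunSup f x = f i x := by
  have hd : (pfunSup f x).Dom := ⟨i, h⟩
  apply Part.ext'
  · exact iff_of_true hd h
  · intro h1 h2
    show (f (Classical.choose h1) x).get (Classical.choose_spec h1) = (f i x).get h2
    obtain ⟨g, hg1, hg2⟩ := hcompat (Classical.choose h1) i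
    have m1 : (f (Classical.choose h1) x).get (Classical.choose_spec h1) ∈ g x :=
      hg1 x _ (Part.get_mem _)
    have m2 : (f i x).get h2 ∈ g x := hg2 x _ (Part.get_mem _)
    exact Part.mem_unique m1 m2

lemma pext_sup_eq (f : I → PF n m)
    (hcompat : ∀ i j, ∃ h : PF n m, f i ≤ h ∧ f j ≤ h)
    {i : I} {x : Fin n → ℝ} (h : (f i x).Dom) : pext (pfunSup f) x = pext (f i) x := by
  simp only [pext, sup_eq_of_dom f hcompat h]

lemma ev_eq (f : I → PF n m) (hdom : ∀ i, IsOpen (f i).Dom)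
    (hcompat : ∀ i j, ∃ h : PF n m, f i ≤ h ∧ f j ≤ h)
    {i : I} {x : Fin n → ℝ} (hx : x ∈ (f i).Dom) (j : Fin n) (k : Fin m) :
    (fun t : ℝ => pext (pfunSup f) (x + t • (Pi.single j 1 : Fin n → ℝ)) k)
      =ᶠ[nhds (0:ℝ)] (fun t => pext (f i) (x + t • (Pi.single j 1 : Fin n → ℝ)) k) := by
  have hc : Continuous (fun t : ℝ => x + t • (Pi.single j 1 : Fin n → ℝ)) := by
    continuity
  have h0 : (fun t : ℝ => x + t • (Pi.single j 1 : Fin n → ℝ)) 0 = x := by simp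
  have hmem : ∀ᶠ t in nhds (0:ℝ), (x + t • (Pi.single j 1 : Fin n → ℝ)) ∈ (f i).Dom := by
    have := hc.continuousAt (x := (0:ℝ)) |>.preimage_mem_nhds
      (h0 ▸ (hdom i).mem_nhds hx)
    exact this
  filter_upwards [hmem] with t ht
  rw [pext_sup_eq f hcompat ht]

lemma jac_sup_eq (f : I → PF n m) (hdom : ∀ i, IsOpen (f i).Dom)
    (hcompat : ∀ i j, ∃ h : PF n m, f i ≤ h ∧ f j ≤ h)
    {i : I} {x : Fin n → ℝ} (hx : x ∈ (f i).Dom) :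
    jac (pfunSup f) x = jac (f i) x := by
  funext k j
  exact (ev_eq f hdom hcompat hx j k).deriv_eq

lemma jacDefined_sup_iff (f : I → PF n m) (hdom : ∀ i, IsOpen (f i).Dom)
    (hcompat : ∀ i j, ∃ h : PF n m, f i ≤ h ∧ f j ≤ h) (x : Fin n → ℝ) :
    JacDefined (pfunSup f) x ↔ ∃ i, JacDefined (f i) x := by
  constructor
  · rintro ⟨⟨i, hi⟩, hdiff⟩
    refine ⟨i, hi, fun k j => ?_⟩
    exact ((ev_eq f hdom hcompat hi j k).differentiableAt_iff).mp (hdiff k j)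
  · rintro ⟨i, hi, hdiff⟩
    refine ⟨⟨i, hi⟩, fun k j => ?_⟩
    exact ((ev_eq f hdom hcompat hi j k).differentiableAt_iff).mpr (hdiff k j)

end aux

/-- for a compatible family of partial functions with open domains,
the forward differential of the supremum is the supremum of the forward differentials,
and similarly for reverse differentials. -/

theorem diff_of_sup {n m : ℕ} {I : Type*} (f : I → PF n m)
    (hdom : ∀ i, IsOpen (f i).Dom)
    (hcompat : ∀ i j, ∃ h : PF n m, f i ≤ h ∧ f j ≤ h) :
    fdiff (pfunSup f) = pfunSup (fun i => fdiff (f i)) ∧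
    rdiff (pfunSup f) = pfunSup (fun i => rdiff (f i)) := by
  have hD := jacDefined_sup_iff f hdom hcompat
  constructor
  · funext z
    apply Part.ext'
    · exact hD (vleft n n z)
    · intro h1 h2
      have h2' : ∃ i, JacDefined (f i) (vleft n n z) := h2
      show (jac (pfunSup f) (vleft n n z)).mulVec (vright n n z)
          = (jac (f (Classical.choose h2')) (vleft n n z)).mulVec (vright n n z)
      rw [jac_sup_eq f hdom hcompat (Classical.choose_spec h2').1]
  · funext z
    apply Part.ext'
    · exact hD (vleft n m z)
    · intro h1 h2
      have h2' : ∃ i, JacDefined (f i) (vleft n m z) := h2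
      show (jac (pfunSup f) (vleft n m z)).transpose.mulVec (vright n m z)
          = (jac (f (Classical.choose h2')) (vleft n m z)).transpose.mulVec (vright n m z)
      rw [jac_sup_eq f hdom hcompat (Classical.choose_spec h2').1]
end

section
/- Let p : ℝⁿ ⇀ 𝕋 be a continuous partial predicate into the discrete two-point space 𝕋 = {tt, ff} (equivalently, p⁻¹(tt) and p⁻¹(ff) are open), and let f, g : ℝⁿ ⇀ ℝᵐ be partial functions with open domains. Then the forward differential of the conditional satisfies d(Cond(p,f,g)) = Cond(p ∘ π₁, d f, d g), where π₁ projects the first argument. -/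
open scoped Classical

open Filter in
private lemma jac_congr_aux {n m : ℕ} {F G : PF n m} {x : Fin n → ℝ}
    (h : pext F =ᶠ[nhds x] pext G)
    (hFG : x ∈ F.Dom ↔ x ∈ G.Dom) :
    (JacDefined F x ↔ JacDefined G x) ∧ jac F x = jac G x := by
  have hline : ∀ (i : Fin m) (j : Fin n),
      (fun t : ℝ => pext F (x + t • (Pi.single j 1 : Fin n → ℝ)) i) =ᶠ[nhds (0:ℝ)]
      (fun t : ℝ => pext G (x + t • (Pi.single j 1 : Fin n → ℝ)) i) := by
    intro i j
    have hc : Continuous (fun t : ℝ => x + t • (Pi.single j 1 : Fin n → ℝ)) := by continuity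
    have ht : Filter.Tendsto (fun t : ℝ => x + t • (Pi.single j 1 : Fin n → ℝ))
        (nhds 0) (nhds x) := by
      simpa using (hc.tendsto (0:ℝ))
    exact (h.comp_tendsto ht).fun_comp (fun v => v i)
  constructor
  · exact and_congr hFG (forall_congr' fun i => forall_congr' fun j =>
      (hline i j).differentiableAt_iff)
  · funext i j
    exact (hline i j).deriv_eq

private lemma pcond_pext_left {n m : ℕ} {p : PFun (Fin n → ℝ) Bool} {f g : PF n m}
    (hp : PCont p) (hf : IsOpen f.Dom) {x : Fin n → ℝ}
    (htt : true ∈ p x) (hx : x ∈ f.Dom) :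
    pext (pcond p f g) =ᶠ[nhds x] pext f := by
  have hU : IsOpen (p.preimage {true} ∩ f.Dom) := (hp {true} (isOpen_discrete _)).inter hf
  have hxU : x ∈ p.preimage {true} ∩ f.Dom := ⟨⟨true, by simp, htt⟩, hx⟩
  filter_upwards [hU.mem_nhds hxU] with y hy
  obtain ⟨hy1, hy2⟩ := hy
  obtain ⟨b, hb, hby⟩ := hy1
  simp only [Set.mem_singleton_iff] at hb; subst hb
  have hdom : (pcond p f g y).Dom := Or.inl ⟨hby, hy2⟩
  have hy2' : (f y).Dom := hy2
  show pext (pcond p f g) y = pext f y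
  simp only [pext, dif_pos hdom, dif_pos hy2']
  show (if _ : true ∈ p y then (f y).get _ else (g y).get _) = (f y).get hy2
  rw [dif_pos (show true ∈ p y from hby)]

private lemma pcond_pext_right {n m : ℕ} {p : PFun (Fin n → ℝ) Bool} {f g : PF n m}
    (hp : PCont p) (hg : IsOpen g.Dom) {x : Fin n → ℝ}
    (hff : false ∈ p x) (hx : x ∈ g.Dom) :
    pext (pcond p f g) =ᶠ[nhds x] pext g := by
  have hU : IsOpen (p.preimage {false} ∩ g.Dom) := (hp {false} (isOpen_discrete _)).inter hg
  have hxU : x ∈ p.preimage {false} ∩ g.Dom := ⟨⟨false, by simp, hff⟩, hx⟩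
  filter_upwards [hU.mem_nhds hxU] with y hy
  obtain ⟨hy1, hy2⟩ := hy
  obtain ⟨b, hb, hby⟩ := hy1
  simp only [Set.mem_singleton_iff] at hb; subst hb
  have hnt : ¬ (true ∈ p y) := fun ht =>
    absurd (Part.mem_unique ht hby) (by simp)
  have hdom : (pcond p f g y).Dom := Or.inr ⟨hby, hy2⟩
  have hy2' : (g y).Dom := hy2
  show pext (pcond p f g) y = pext g y
  simp only [pext, dif_pos hdom, dif_pos hy2']
  show (if _ : true ∈ p y then (f y).get _ else (g y).get _) = (g y).get hy2
  rw [dif_neg hnt]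

/-- for a continuous partial predicate `p` and partial functions `f`, `g`
with open domains, `d(Cond(p,f,g)) = Cond(p ∘ π₁, d f, d g)`. -/
theorem fdiff_cond {n m : ℕ} (p : PFun (Fin n → ℝ) Bool) (f g : PF n m)
    (hp : PCont p) (hf : IsOpen f.Dom) (hg : IsOpen g.Dom) :
    fdiff (pcond p f g) = pcond (fun z => p (vleft n n z)) (fdiff f) (fdiff g) := by
  have keyT : ∀ x : Fin n → ℝ, true ∈ p x → x ∈ f.Dom →
      (JacDefined (pcond p f g) x ↔ JacDefined f x) ∧ jac (pcond p f g) x = jac f x :=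
    fun x htt hx => jac_congr_aux (pcond_pext_left hp hf htt hx)
      ⟨fun _ => hx, fun _ => Or.inl ⟨htt, hx⟩⟩
  have keyF : ∀ x : Fin n → ℝ, false ∈ p x → x ∈ g.Dom →
      (JacDefined (pcond p f g) x ↔ JacDefined g x) ∧ jac (pcond p f g) x = jac g x :=
    fun x hff hx => jac_congr_aux (pcond_pext_right hp hg hff hx)
      ⟨fun _ => hx, fun _ => Or.inr ⟨hff, hx⟩⟩
  funext z
  apply Part.ext'
  · show JacDefined (pcond p f g) (vleft n n z) ↔
      (true ∈ p (vleft n n z) ∧ JacDefined f (vleft n n z)) ∨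
      (false ∈ p (vleft n n z) ∧ JacDefined g (vleft n n z))
    constructor
    · rintro ⟨hdom, hdiff⟩
      rcases hdom with ⟨htt, hxf⟩ | ⟨hff, hxg⟩
      · exact Or.inl ⟨htt, ((keyT _ htt hxf).1).mp ⟨Or.inl ⟨htt, hxf⟩, hdiff⟩⟩
      · exact Or.inr ⟨hff, ((keyF _ hff hxg).1).mp ⟨Or.inr ⟨hff, hxg⟩, hdiff⟩⟩
    · rintro (⟨htt, hJ⟩ | ⟨hff, hJ⟩)
      · exact ((keyT _ htt hJ.1).1).mpr hJ
      · exact ((keyF _ hff hJ.1).1).mpr hJ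
  · intro hL hR
    show (jac (pcond p f g) (vleft n n z)).mulVec (vright n n z) =
      if _ : true ∈ p (vleft n n z) then (jac f (vleft n n z)).mulVec (vright n n z)
      else (jac g (vleft n n z)).mulVec (vright n n z)
    by_cases htt : true ∈ p (vleft n n z)
    · rw [dif_pos htt]
      have hxf : vleft n n z ∈ f.Dom := by
        rcases hL.1 with ⟨_, h⟩ | ⟨hff, _⟩
        · exact h
        · exact absurd (Part.mem_unique htt hff) (by simp)
      rw [(keyT _ htt hxf).2]
    · rw [dif_neg htt]
      have hff : false ∈ p (vleft n n z) := by
        rcases hL.1 with ⟨ht, _⟩ | ⟨h, _⟩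
        · exact absurd ht htt
        · exact h
      have hxg : vleft n n z ∈ g.Dom := by
        rcases hL.1 with ⟨ht, _⟩ | ⟨_, h⟩
        · exact absurd ht htt
        · exact h
      rw [(keyF _ hff hxg).2]
end

section
/- Let p : ℝⁿ ⇀ 𝕋 be continuous and f, g : ℝⁿ ⇀ ℝᵐ have open domains. Then the reverse-mode differential of the conditional satisfies d^r(Cond_{n,m}(p,f,g)) = Cond_{(n+m),n}(p ∘ π₁, d^r f, d^r g). -/
open scoped Classical

section Aux
open Filter Topology

lemma line_ev {n m : ℕ} {F G : PF n m} {x : Fin n → ℝ}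
    (h : pext F =ᶠ[nhds x] pext G) (i : Fin m) (j : Fin n) :
    (fun t : ℝ => pext F (x + t • (Pi.single j 1 : Fin n → ℝ)) i)
      =ᶠ[nhds (0:ℝ)] (fun t : ℝ => pext G (x + t • (Pi.single j 1 : Fin n → ℝ)) i) := by
  have hc : Continuous fun t : ℝ => x + t • (Pi.single j 1 : Fin n → ℝ) := by continuity
  have h0 : (fun t : ℝ => x + t • (Pi.single j 1 : Fin n → ℝ)) 0 = x := by simp
  have ht : Filter.Tendsto (fun t : ℝ => x + t • (Pi.single j 1 : Fin n → ℝ)) (nhds 0) (nhds x) := by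
    simpa using hc.tendsto 0
  exact (ht.eventually h).mono fun t hh => congrFun hh i

lemma jac_congr {n m : ℕ} {F G : PF n m} {x : Fin n → ℝ}
    (h : pext F =ᶠ[nhds x] pext G) : jac F x = jac G x := by
  funext i j
  exact (line_ev h i j).deriv_eq

lemma pext_cond_true {n m : ℕ} {p : PFun (Fin n → ℝ) Bool} {f g : PF n m} {y : Fin n → ℝ}
    (hyt : true ∈ p y) (hyf : (f y).Dom) : pext (pcond p f g) y = pext f y := by
  have hyd : ((pcond p f g) y).Dom := Or.inl ⟨hyt, hyf⟩
  unfold pext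
  rw [dif_pos hyd, dif_pos hyf]
  show dite (true ∈ p y) _ _ = _
  rw [dif_pos hyt]

lemma pext_cond_false {n m : ℕ} {p : PFun (Fin n → ℝ) Bool} {f g : PF n m} {y : Fin n → ℝ}
    (hyt : false ∈ p y) (hyg : (g y).Dom) : pext (pcond p f g) y = pext g y := by
  have hnt : ¬ true ∈ p y := fun h => by simpa using Part.mem_unique h hyt
  have hyd : ((pcond p f g) y).Dom := Or.inr ⟨hyt, hyg⟩
  unfold pext
  rw [dif_pos hyd, dif_pos hyg]
  show dite (true ∈ p y) _ _ = _
  rw [dif_neg hnt]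

lemma ev_true {n m : ℕ} {p : PFun (Fin n → ℝ) Bool} {f g : PF n m} {x : Fin n → ℝ}
    (hp : PCont p) (hf : IsOpen f.Dom) (htt : true ∈ p x) (hx : (f x).Dom) :
    pext (pcond p f g) =ᶠ[nhds x] pext f := by
  have hU : IsOpen (p.preimage {true} ∩ f.Dom) :=
    (hp {true} (isOpen_discrete _)).inter hf
  have hxU : x ∈ p.preimage {true} ∩ f.Dom :=
    ⟨(PFun.mem_preimage _ _ _).mpr ⟨true, rfl, htt⟩, hx⟩
  filter_upwards [hU.mem_nhds hxU] with y hy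
  obtain ⟨hy1, hy2⟩ := hy
  obtain ⟨b, hb, hbp⟩ := (PFun.mem_preimage _ _ _).mp hy1
  cases hb
  exact pext_cond_true hbp hy2

lemma ev_false {n m : ℕ} {p : PFun (Fin n → ℝ) Bool} {f g : PF n m} {x : Fin n → ℝ}
    (hp : PCont p) (hg : IsOpen g.Dom) (hff : false ∈ p x) (hx : (g x).Dom) :
    pext (pcond p f g) =ᶠ[nhds x] pext g := by
  have hU : IsOpen (p.preimage {false} ∩ g.Dom) :=
    (hp {false} (isOpen_discrete _)).inter hg
  have hxU : x ∈ p.preimage {false} ∩ g.Dom :=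
    ⟨(PFun.mem_preimage _ _ _).mpr ⟨false, rfl, hff⟩, hx⟩
  filter_upwards [hU.mem_nhds hxU] with y hy
  obtain ⟨hy1, hy2⟩ := hy
  obtain ⟨b, hb, hbp⟩ := (PFun.mem_preimage _ _ _).mp hy1
  cases hb
  exact pext_cond_false hbp hy2

end Aux

/-- for a continuous partial predicate `p` and partial functions `f`, `g`
with open domains, `d^r(Cond_{n,m}(p,f,g)) = Cond_{(n+m),n}(p ∘ π₁, d^r f, d^r g)`. -/
theorem rdiff_cond {n m : ℕ} (p : PFun (Fin n → ℝ) Bool) (f g : PF n m)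
    (hp : PCont p) (hf : IsOpen f.Dom) (hg : IsOpen g.Dom) :
    rdiff (pcond p f g) = pcond (fun z => p (vleft n m z)) (rdiff f) (rdiff g) := by
  funext z
  set X := vleft n m z
  set Y := vright n m z
  have hiff : JacDefined (pcond p f g) X ↔
      ((true ∈ p X ∧ JacDefined f X) ∨ (false ∈ p X ∧ JacDefined g X)) := by
    constructor
    · rintro ⟨hdom, hder⟩
      rcases hdom with ⟨htt, hfx⟩ | ⟨hff, hgx⟩
      · have hev := ev_true (g := g) hp hf htt hfx
        exact Or.inl ⟨htt, hfx, fun i j =>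
          ((line_ev hev i j).differentiableAt_iff).mp (hder i j)⟩
      · have hev := ev_false (f := f) hp hg hff hgx
        exact Or.inr ⟨hff, hgx, fun i j =>
          ((line_ev hev i j).differentiableAt_iff).mp (hder i j)⟩
    · rintro (⟨htt, hfx, hder⟩ | ⟨hff, hgx, hder⟩)
      · have hev := ev_true (g := g) hp hf htt hfx
        exact ⟨Or.inl ⟨htt, hfx⟩, fun i j =>
          ((line_ev hev i j).differentiableAt_iff).mpr (hder i j)⟩
      · have hev := ev_false (f := f) hp hg hff hgx
        exact ⟨Or.inr ⟨hff, hgx⟩, fun i j =>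
          ((line_ev hev i j).differentiableAt_iff).mpr (hder i j)⟩
  apply Part.ext'
  · exact hiff
  · intro ha hb
    show (jac (pcond p f g) X).transpose.mulVec Y = _
    show _ = dite (true ∈ p X) _ _
    by_cases htt : true ∈ p X
    · rw [dif_pos htt]
      have hfx : (f X).Dom := by
        rcases ha.1 with ⟨_, hfx⟩ | ⟨hff, _⟩
        · exact hfx
        · exact absurd (Part.mem_unique htt hff) (by simp)
      rw [jac_congr (ev_true (g := g) hp hf htt hfx)]
      rfl
    · rw [dif_neg htt]
      have hff : false ∈ p X := by
        rcases ha.1 with ⟨htt', _⟩ | ⟨hff, _⟩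
        · exact absurd htt' htt
        · exact hff
      have hgx : (g X).Dom := by
        rcases ha.1 with ⟨htt', _⟩ | ⟨_, hgx⟩
        · exact absurd htt' htt
        · exact hgx
      rw [jac_congr (ev_false (f := f) hp hg hff hgx)]
      rfl
end

section
/- Let Q and R be directed-complete pointed partial orders, and let F : P × Q → Q and G : P × Q × R → R be continuous (P a dcpo), such that D(F(x,f)) = G(x, f, D(f)) for all x ∈ P, f ∈ Q, where D : Q → R is a continuous function that is strict and preserves suprema of increasing chains. Then D applied to the least fixed point satisfies D(μf. F(x,f)) = μf'. G(x, μf. F(x,f), f'). -/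
/-- The iterates of `T` starting from `⊥`: `μ₀ = ⊥`, `μ_{n+1} = T μₙ`. -/
def iterLfp {Q : Type*} [Preorder Q] [OrderBot Q] (T : Q → Q) : ℕ → Q
  | 0 => ⊥
  | k + 1 => T (iterLfp T (k))

lemma iterLfp_mono {Q : Type*} [Preorder Q] [OrderBot Q] {T : Q → Q}
    (hT : Monotone T) : Monotone (iterLfp T) := by
  have step : ∀ n, iterLfp T n ≤ iterLfp T (n + 1) := by
    intro n
    induction n with
    | zero => exact bot_le
    | succ k ih => exact hT ih
  exact monotone_nat_of_le_succ step

/-- let `P` be a dcpo and `Q`, `R` dcppos, `F : P × Q → Q` and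
`G : P × Q × R → R` continuous (monotone and preserving suprema of increasing chains),
and `D : Q → R` continuous, strict, and preserving suprema of increasing chains, with
`D (F (x, f)) = G (x, f, D f)` for all `x, f`.  Then `D` applied to the least fixed
point `μf. F(x,f)` (the supremum of the iterates from `⊥`) is the least fixed point
`μf'. G(x, μf. F(x,f), f')`. -/
theorem D_lfp {P Q R : Type*} [PartialOrder P] [PartialOrder Q] [OrderBot Q]
    [PartialOrder R] [OrderBot R]
    (dcP : ∀ d : Set P, d.Nonempty → DirectedOn (· ≤ ·) d → ∃ a, IsLUB d a)
    (dcQ : ∀ d : Set Q, d.Nonempty → DirectedOn (· ≤ ·) d → ∃ a, IsLUB d a)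
    (dcR : ∀ d : Set R, d.Nonempty → DirectedOn (· ≤ ·) d → ∃ a, IsLUB d a)
    (F : P × Q → Q) (G : P × Q × R → R) (D : Q → R)
    (hFmono : Monotone F) (hGmono : Monotone G) (hDmono : Monotone D)
    (hFcont : ∀ (x : P) (c : ℕ → Q), Monotone c → ∀ q, IsLUB (Set.range c) q →
      IsLUB (Set.range fun j => F (x, c j)) (F (x, q)))
    (hGcont : ∀ (x : P) (q : Q) (c : ℕ → R), Monotone c → ∀ r, IsLUB (Set.range c) r →
      IsLUB (Set.range fun j => G (x, q, c j)) (G (x, q, r)))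
    (hDstrict : D ⊥ = ⊥)
    (hDcont : ∀ c : ℕ → Q, Monotone c → ∀ q, IsLUB (Set.range c) q →
      IsLUB (Set.range fun j => D (c j)) (D q))
    (hDF : ∀ x f, D (F (x, f)) = G (x, f, D f)) :
    ∀ (x : P) (q : Q) (r : R),
      IsLUB (Set.range (iterLfp fun f => F (x, f))) q →
      IsLUB (Set.range (iterLfp fun f' => G (x, q, f'))) r →
      D q = r := by
  intro x q r hq hr
  set μ : ℕ → Q := iterLfp fun f => F (x, f) with hμ
  set ν : ℕ → R := iterLfp fun f' => G (x, q, f') with hν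
  have hFx : Monotone (fun f => F (x, f)) := fun a b h => hFmono ⟨le_refl x, h⟩
  have hGx : Monotone (fun f' => G (x, q, f')) :=
    fun a b h => hGmono ⟨le_refl x, le_refl q, h⟩
  have hμmono : Monotone μ := iterLfp_mono hFx
  have hνmono : Monotone ν := iterLfp_mono hGx
  -- q is a fixed point of F(x,·)
  have hshift : IsLUB (Set.range fun j => μ (j + 1)) q := by
    constructor
    · rintro _ ⟨j, rfl⟩
      exact hq.1 ⟨j + 1, rfl⟩
    · intro b hb
      apply hq.2
      rintro _ ⟨j, rfl⟩
      cases j with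
      | zero => exact bot_le
      | succ k => exact hb ⟨k, rfl⟩
  have hfix : F (x, q) = q := by
    have h1 := hFcont x μ hμmono q hq
    exact h1.unique hshift
  -- μ j ≤ q
  have hμleq : ∀ j, μ j ≤ q := fun j => hq.1 ⟨j, rfl⟩
  -- D μ j ≤ ν j by induction
  have hDμν : ∀ j, D (μ j) ≤ ν j := by
    intro j
    induction j with
    | zero => simpa [hμ, hν, iterLfp] using le_of_eq hDstrict
    | succ k ih =>
      show D (F (x, μ k)) ≤ G (x, q, ν k)
      rw [hDF]
      exact hGmono ⟨le_refl x, hμleq k, ih⟩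
  -- ν j ≤ D q by induction
  have hνDq : ∀ j, ν j ≤ D q := by
    intro j
    induction j with
    | zero => exact bot_le
    | succ k ih =>
      show G (x, q, ν k) ≤ D q
      calc G (x, q, ν k) ≤ G (x, q, D q) := hGmono ⟨le_refl x, le_refl q, ih⟩
        _ = D (F (x, q)) := (hDF x q).symm
        _ = D q := by rw [hfix]
  have hDq : IsLUB (Set.range fun j => D (μ j)) (D q) := hDcont μ hμmono q hq
  apply le_antisymm
  · apply hDq.2
    rintro _ ⟨j, rfl⟩
    exact le_trans (hDμν j) (hr.1 ⟨j, rfl⟩)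
  · exact hr.2 (by rintro _ ⟨j, rfl⟩; exact hνDq j)
end
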